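/- Let k contain all l-th roots of unity and α: k((t))[x_1,...,x_d] → k((t))[x_1,...,x_d] be the k((t))-automorphism x_i ↦ t^{-a_i}x_i. Then the map Λ → Λ' sending a μ_l-equivariant k[[t]]-algebra homomorphism γ: k[[t]][x] → k[[t]] to the restriction of (extension of γ to k((t)))∘α to k[[t^l]][x_1,...,x_d] is a bijection onto the set Λ' of k[[t^l]]-algebra homomorphisms k[[t^l]][x_1,...,x_d] → k[[t^l]]. -/

import Mathlib

open MvPolynomial

/-- The action of an `l`-th root of unity `ζ` on `k[[t]][x_1,...,x_d]`:
`t ↦ ζ t` and `x_i ↦ ζ^{a_i} x_i`. -/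
noncomputable def muActionHom (k : Type*) [CommRing k] {d : ℕ} (a : Fin d → ℕ) (ζ : k) :
    MvPolynomial (Fin d) (PowerSeries k) →+* MvPolynomial (Fin d) (PowerSeries k) :=
  eval₂Hom ((C : PowerSeries k →+* MvPolynomial (Fin d) (PowerSeries k)).comp
      (PowerSeries.rescale ζ))
    (fun i => C ((PowerSeries.C ζ) ^ a i) * X i)

/-- `μ_l`-equivariance of a `k[[t]]`-algebra homomorphism `k[[t]][x_1,...,x_d] → k[[t]]`. -/
def IsEquivariantHom {k : Type*} [CommRing k] {d : ℕ} (a : Fin d → ℕ) (ζ : k)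
    (γ : MvPolynomial (Fin d) (PowerSeries k) →ₐ[PowerSeries k] PowerSeries k) : Prop :=
  ∀ p, γ (muActionHom k a ζ p) = PowerSeries.rescale ζ (γ p)

/-- The subalgebra `k[[t^l]] ⊆ k[[t]]` of power series supported in degrees divisible
by `l`. -/
def lPowerSub (k : Type*) [Field k] (l : ℕ) : Subalgebra k (PowerSeries k) where
  carrier := {f | ∀ m : ℕ, ¬ l ∣ m → PowerSeries.coeff m f = 0}
  add_mem' := by
    intro x y hx hy m hm
    simp only [Set.mem_setOf_eq] at hx hy ⊢
    simp only [map_add, hx m hm, hy m hm, add_zero]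
  mul_mem' := by
    intro x y hx hy m hm
    simp only [Set.mem_setOf_eq] at hx hy ⊢
    rw [PowerSeries.coeff_mul]
    refine Finset.sum_eq_zero fun p hp => ?_
    have hpm : p.1 + p.2 = m := Finset.HasAntidiagonal.mem_antidiagonal.mp hp
    by_cases h1 : l ∣ p.1
    · have h2 : ¬ l ∣ p.2 := fun h2 => hm (hpm ▸ dvd_add h1 h2)
      rw [hy p.2 h2, mul_zero]
    · rw [hx p.1 h1, zero_mul]
  one_mem' := by
    intro m hm
    have hm0 : m ≠ 0 := fun h => hm (h ▸ dvd_zero l)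
    simp [PowerSeries.coeff_one, hm0]
  zero_mem' := by
    intro m _
    simp
  algebraMap_mem' := by
    intro c m hm
    have hm0 : m ≠ 0 := fun h => hm (h ▸ dvd_zero l)
    have : algebraMap k (PowerSeries k) c = PowerSeries.C c := rfl
    simp [this, PowerSeries.coeff_C, hm0]


section Helpers5

variable {k : Type*} [Field k] {l d : ℕ} {ζ : k} {a : Fin d → ℕ}

lemma muActionHom_C5 (r : PowerSeries k) :
    muActionHom k a ζ (C r) = C (PowerSeries.rescale ζ r) := by
  simp [muActionHom]

lemma muActionHom_X5 (i : Fin d) :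
    muActionHom k a ζ (X i) = C ((PowerSeries.C ζ) ^ a i) * X i := by
  simp [muActionHom]

lemma algHom_C_apply5 (γ : MvPolynomial (Fin d) (PowerSeries k) →ₐ[PowerSeries k] PowerSeries k)
    (r : PowerSeries k) : γ (C r) = r := by
  have := γ.commutes r
  simpa [MvPolynomial.algebraMap_eq] using this

lemma equivariant_iff5
    (γ : MvPolynomial (Fin d) (PowerSeries k) →ₐ[PowerSeries k] PowerSeries k) :
    IsEquivariantHom a ζ γ ↔
      ∀ i, (PowerSeries.C ζ) ^ a i * γ (X i) = PowerSeries.rescale ζ (γ (X i)) := by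
  constructor
  · intro h i
    have := h (X i)
    rw [muActionHom_X5] at this
    rw [← this, map_mul, algHom_C_apply5]
  · intro h p
    have : (γ.toRingHom.comp (muActionHom k a ζ)) =
        (PowerSeries.rescale ζ).comp γ.toRingHom := by
      apply MvPolynomial.ringHom_ext
      · intro r
        simp only [RingHom.comp_apply, AlgHom.toRingHom_eq_coe, RingHom.coe_coe]
        rw [muActionHom_C5, algHom_C_apply5, algHom_C_apply5]
      · intro i
        simp only [RingHom.comp_apply, AlgHom.toRingHom_eq_coe, RingHom.coe_coe]
        rw [muActionHom_X5, map_mul, algHom_C_apply5, h i]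
    exact RingHom.congr_fun this p

/-- The key coefficient-wise criterion for a power series of the form `X^n * g` with
`g ∈ lPowerSub` to satisfy the rescale relation. -/
lemma rescale_rel_of_mem (hζl : ζ ^ l = 1) (n : ℕ)
    (g : PowerSeries k) (hg : g ∈ lPowerSub k l) :
    (PowerSeries.C ζ) ^ n * (PowerSeries.X ^ n * g)
      = PowerSeries.rescale ζ (PowerSeries.X ^ n * g) := by
  ext m
  rw [PowerSeries.coeff_rescale, ← map_pow, PowerSeries.coeff_C_mul,
    PowerSeries.coeff_X_pow_mul']
  split_ifs with h
  · by_cases hc : PowerSeries.coeff (m - n) g = 0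
    · rw [hc, mul_zero, mul_zero]
    · have hdvd : l ∣ (m - n) := by
        by_contra hnd
        exact hc (hg _ hnd)
      obtain ⟨c, hc'⟩ := hdvd
      have : ζ ^ m = ζ ^ n := by
        have : m = n + l * c := by omega
        rw [this, pow_add, pow_mul, hζl, one_pow, mul_one]
      rw [this]
  · simp

end Helpers5

/-- Let `k` contain a primitive `l`-th root of unity `ζ` and let
`α : k((t))[x_1,...,x_d] → k((t))[x_1,...,x_d]` be the `k((t))`-automorphism
`x_i ↦ t^{-a_i} x_i`.  The map `Λ → Λ'` sending a `μ_l`-equivariant `k[[t]]`-algebra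
homomorphism `γ : k[[t]][x] → k[[t]]` to the restriction of (the Laurent extension of
`γ`) `∘ α` to `k[[t^l]][x_1,...,x_d]` is a bijection onto the set `Λ'` of
`k[[t^l]]`-algebra homomorphisms `k[[t^l]][x_1,...,x_d] → k[[t^l]]`.  The correspondence
`γ ↔ ψ` is characterized by `γ(x_i) = t^{a_i} · ψ(x_i)`, and bijectivity is expressed by
the two unique-existence statements. -/


theorem equivariant_homs_biject_with_invariant_ring_homs
    (k : Type*) [Field k] (l d : ℕ) (hl : 0 < l)
    (ζ : k) (hζ : IsPrimitiveRoot ζ l)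
    (a : Fin d → ℕ) (ha : ∀ i, a i ≤ l - 1) :
    (∀ ψ : MvPolynomial (Fin d) (lPowerSub k l) →ₐ[lPowerSub k l] lPowerSub k l,
      ∃! γ : {γ : MvPolynomial (Fin d) (PowerSeries k) →ₐ[PowerSeries k] PowerSeries k //
          IsEquivariantHom a ζ γ},
        ∀ i : Fin d,
          (γ : MvPolynomial (Fin d) (PowerSeries k) →ₐ[PowerSeries k] PowerSeries k) (X i)
            = (PowerSeries.X : PowerSeries k) ^ a i * ((ψ (X i) : PowerSeries k))) ∧
    (∀ γ : {γ : MvPolynomial (Fin d) (PowerSeries k) →ₐ[PowerSeries k] PowerSeries k //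
        IsEquivariantHom a ζ γ},
      ∃! ψ : MvPolynomial (Fin d) (lPowerSub k l) →ₐ[lPowerSub k l] lPowerSub k l,
        ∀ i : Fin d,
          (γ : MvPolynomial (Fin d) (PowerSeries k) →ₐ[PowerSeries k] PowerSeries k) (X i)
            = (PowerSeries.X : PowerSeries k) ^ a i * ((ψ (X i) : PowerSeries k))) := by
  
  have hζl : ζ ^ l = 1 := hζ.pow_eq_one
  have hal : ∀ i, a i < l := fun i => lt_of_le_of_lt (ha i) (Nat.sub_lt hl one_pos)
  have hζ0 : ζ ≠ 0 := fun h => by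
    rw [h, zero_pow hl.ne'] at hζl; exact one_ne_zero hζl.symm
  constructor
  · -- direction 1: given ψ, construct γ
    intro ψ
    set f : Fin d → PowerSeries k :=
      fun i => (PowerSeries.X : PowerSeries k) ^ a i * ((ψ (X i) : PowerSeries k)) with hf
    have hequiv : IsEquivariantHom a ζ (aeval f) := by
      rw [equivariant_iff5]
      intro i
      rw [aeval_X]
      exact rescale_rel_of_mem hζl (a i) _ (ψ (X i)).2
    refine ⟨⟨aeval f, hequiv⟩, fun i => by simp [aeval_X, hf], ?_⟩
    rintro ⟨γ, hγ⟩ hγX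
    apply Subtype.ext
    apply MvPolynomial.algHom_ext
    intro i
    simp only at hγX ⊢
    rw [hγX i, aeval_X]
  · -- direction 2: given γ, construct ψ
    rintro ⟨γ, hγ⟩
    have hrel := (equivariant_iff5 γ).mp hγ
    -- coefficient relation for f i := γ (X i)
    have hcoeff : ∀ i m, ζ ^ a i * PowerSeries.coeff m (γ (X i))
        = ζ ^ m * PowerSeries.coeff m (γ (X i)) := by
      intro i m
      have := congrArg (PowerSeries.coeff m) (hrel i)
      rwa [PowerSeries.coeff_rescale, ← map_pow, PowerSeries.coeff_C_mul] at this
    have hvanish : ∀ i m, ζ ^ m ≠ ζ ^ a i → PowerSeries.coeff m (γ (X i)) = 0 := by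
      intro i m hne
      have := hcoeff i m
      by_contra hc
      exact hne (mul_right_cancel₀ hc this.symm)
    set g : Fin d → PowerSeries k :=
      fun i => PowerSeries.mk fun m => PowerSeries.coeff (m + a i) (γ (X i)) with hgdef
    have hgmem : ∀ i, g i ∈ lPowerSub k l := by
      intro i m hm
      rw [hgdef]
      simp only [PowerSeries.coeff_mk]
      apply hvanish
      intro h
      have : ζ ^ m = 1 := by
        have h2 : ζ ^ m * ζ ^ a i = 1 * ζ ^ a i := by
          rw [one_mul, ← pow_add, h]
        exact mul_right_cancel₀ (pow_ne_zero _ hζ0) h2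
      exact hm ((hζ.pow_eq_one_iff_dvd m).mp this)
    have hfact : ∀ i, γ (X i) = (PowerSeries.X : PowerSeries k) ^ a i * g i := by
      intro i
      ext m
      rw [PowerSeries.coeff_X_pow_mul']
      split_ifs with h
      · rw [hgdef]; simp only [PowerSeries.coeff_mk]
        rw [Nat.sub_add_cancel h]
      · apply hvanish
        intro hpow
        have hmlt : m < a i := by omega
        have : ζ ^ (a i - m) = 1 := by
          have h2 : ζ ^ (a i - m) * ζ ^ m = 1 * ζ ^ m := by
            rw [one_mul, ← pow_add]
            rw [hpow]
            congr 1
            omega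
          exact mul_right_cancel₀ (pow_ne_zero _ hζ0) h2
        have := hζ.pow_ne_one_of_pos_of_lt (by omega : a i - m ≠ 0)
          (by have := hal i; omega : a i - m < l)
        exact this ‹ζ ^ (a i - m) = 1›
    set ψ : MvPolynomial (Fin d) (lPowerSub k l) →ₐ[lPowerSub k l] lPowerSub k l :=
      aeval (fun i => (⟨g i, hgmem i⟩ : lPowerSub k l)) with hψdef
    have hψX : ∀ i, ((ψ (X i) : PowerSeries k)) = g i := by
      intro i; rw [hψdef, aeval_X]
    refine ⟨ψ, fun i => by rw [hψX i]; exact hfact i, ?_⟩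
    intro ψ' hψ'
    apply MvPolynomial.algHom_ext
    intro i
    have h1 := hψ' i
    have h2 : γ (X i) = (PowerSeries.X : PowerSeries k) ^ a i * ((ψ (X i) : PowerSeries k)) := by
      rw [hψX i]; exact hfact i
    have h12 : (PowerSeries.X : PowerSeries k) ^ a i * ((ψ' (X i) : PowerSeries k))
        = (PowerSeries.X : PowerSeries k) ^ a i * ((ψ (X i) : PowerSeries k)) :=
      h1.symm.trans h2
    have h3 : ((ψ' (X i) : PowerSeries k)) = ((ψ (X i) : PowerSeries k)) :=
      mul_left_cancel₀ (pow_ne_zero _ PowerSeries.X_ne_zero) h12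
    exact Subtype.ext h3
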